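/- Let 𝒰 be a Unique Games instance over alphabet [Q] on a finite multigraph G=(V,E) with no isolated vertices, let R⊆V be nonempty, and set π_R(v)=deg(v)/vol(R) for v∈R. Let (K^Π) be nonnegative kernels on R, indexed by permutations Π of [Q], with Σ_{v∈R}Σ_Π K^Π(u,v)=1 for every u∈R, and suppose that for all u,v∈R and every permutation Π, K^Π(u,v) ≥ (1/(2·deg(u)))·(number of edge copies with endpoints u,v whose constraint oriented from u to v equals Π). If there exist a nonempty S⊆R and ℓ:S→[Q] with β_R(S,ℓ) < η/4, then S is η-UG-peelable in R. -/

import Mathlib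

open scoped Classical

noncomputable section

/-- Degree of a vertex in a finite multigraph given by endpoint maps (with multiplicity). -/
def mdeg {V E : Type} [Fintype E] [DecidableEq V] (fste snde : E → V) (v : V) : ℕ :=
  (Finset.univ.filter (fun e => fste e = v)).card +
    (Finset.univ.filter (fun e => snde e = v)).card

/-- Volume of a vertex set: `vol(S) = Σ_{v∈S} deg(v)`. -/
def mvol {V E : Type} [Fintype E] [DecidableEq V] (fste snde : E → V) (S : Finset V) : ℕ :=
  ∑ v ∈ S, mdeg fste snde v

/-- Number of edge copies with endpoints `u, v` whose constraint oriented from `u` to `v`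
equals `g` (constraints are stored oriented from `fste` to `snde`). -/
def cEdges {V E : Type} [Fintype E] [DecidableEq V] {Q : ℕ}
    (fste snde : E → V) (perm : E → Equiv.Perm (Fin Q))
    (u v : V) (g : Equiv.Perm (Fin Q)) : ℕ :=
  (Finset.univ.filter (fun e =>
    (fste e = u ∧ snde e = v ∧ perm e = g) ∨
    (fste e = v ∧ snde e = u ∧ (perm e)⁻¹ = g))).card

/-- `β_R(S,ℓ)` for kernels `(K^Π)` on `R`, with `π_R(v) = deg(v)/vol(R)`. -/
def betaR {V E : Type} [Fintype V] [Fintype E] [DecidableEq V] {Q : ℕ}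
    (fste snde : E → V) (K : Equiv.Perm (Fin Q) → V → V → ℝ)
    (R S : Finset V) (ℓ : V → Fin Q) : ℝ :=
  (∑ u ∈ S, ((mdeg fste snde u : ℝ) / (mvol fste snde R : ℝ)))⁻¹ *
    ∑ u ∈ S, ((mdeg fste snde u : ℝ) / (mvol fste snde R : ℝ)) *
      ((∑ v ∈ R \ S, ∑ g : Equiv.Perm (Fin Q), K g u v) +
        ∑ v ∈ S, ∑ g : Equiv.Perm (Fin Q), if ℓ v ≠ g (ℓ u) then K g u v else 0)

/-- Number of edge copies internal to `S` violated by `ℓ`. -/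
def badIn {V E : Type} [Fintype E] [DecidableEq V] {Q : ℕ}
    (fste snde : E → V) (perm : E → Equiv.Perm (Fin Q)) (S : Finset V) (ℓ : V → Fin Q) : ℕ :=
  (Finset.univ.filter (fun e =>
    fste e ∈ S ∧ snde e ∈ S ∧ ℓ (snde e) ≠ perm e (ℓ (fste e)))).card

/-- Number of edge copies with one endpoint in `S` and the other in `R \ S`. -/
def bdry {V E : Type} [Fintype E] [DecidableEq V] (fste snde : E → V) (S R : Finset V) : ℕ :=
  (Finset.univ.filter (fun e =>
    (fste e ∈ S ∧ snde e ∈ R \ S) ∨ (snde e ∈ S ∧ fste e ∈ R \ S))).card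

section Aux

lemma swap4 {α β γ δ M : Type*} [AddCommMonoid M] (s : Finset α) (t : Finset β)
    (r : Finset γ) (w : Finset δ) (f : α → β → γ → δ → M) :
    ∑ a ∈ s, ∑ b ∈ t, ∑ c ∈ r, ∑ d ∈ w, f a b c d
      = ∑ d ∈ w, ∑ a ∈ s, ∑ b ∈ t, ∑ c ∈ r, f a b c d := by
  have h1 : ∑ a ∈ s, ∑ b ∈ t, ∑ c ∈ r, ∑ d ∈ w, f a b c d
      = ∑ a ∈ s, ∑ b ∈ t, ∑ d ∈ w, ∑ c ∈ r, f a b c d :=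
    Finset.sum_congr rfl fun a _ => Finset.sum_congr rfl fun b _ => Finset.sum_comm
  have h2 : ∑ a ∈ s, ∑ b ∈ t, ∑ d ∈ w, ∑ c ∈ r, f a b c d
      = ∑ a ∈ s, ∑ d ∈ w, ∑ b ∈ t, ∑ c ∈ r, f a b c d :=
    Finset.sum_congr rfl fun a _ => Finset.sum_comm
  have h3 : ∑ a ∈ s, ∑ d ∈ w, ∑ b ∈ t, ∑ c ∈ r, f a b c d
      = ∑ d ∈ w, ∑ a ∈ s, ∑ b ∈ t, ∑ c ∈ r, f a b c d := Finset.sum_comm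
  rw [h1, h2, h3]

lemma le_sum3 {ι κ μ : Type*} (s : Finset ι) (t : Finset κ) (w : Finset μ)
    (f : ι → κ → μ → ℕ) {a : ι} {b : κ} {c : μ}
    (ha : a ∈ s) (hb : b ∈ t) (hc : c ∈ w) :
    f a b c ≤ ∑ i ∈ s, ∑ j ∈ t, ∑ k ∈ w, f i j k := by
  calc f a b c ≤ ∑ k ∈ w, f a b k := Finset.single_le_sum (fun _ _ => Nat.zero_le _) hc
    _ ≤ ∑ j ∈ t, ∑ k ∈ w, f a j k :=
        Finset.single_le_sum (f := fun j => ∑ k ∈ w, f a j k) (fun _ _ => Nat.zero_le _) hb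
    _ ≤ _ := Finset.single_le_sum (f := fun i => ∑ j ∈ t, ∑ k ∈ w, f i j k)
        (fun _ _ => Nat.zero_le _) ha

lemma le_sum2 {κ μ : Type*} (t : Finset κ) (w : Finset μ)
    (f : κ → μ → ℕ) {b : κ} {c : μ} (hb : b ∈ t) (hc : c ∈ w) :
    f b c ≤ ∑ j ∈ t, ∑ k ∈ w, f j k := by
  calc f b c ≤ ∑ k ∈ w, f b k := Finset.single_le_sum (fun _ _ => Nat.zero_le _) hc
    _ ≤ _ := Finset.single_le_sum (f := fun j => ∑ k ∈ w, f j k)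
        (fun _ _ => Nat.zero_le _) hb

lemma two_le_sum {ι : Type*} [DecidableEq ι] (s : Finset ι) (f : ι → ℕ) {a b : ι}
    (ha : a ∈ s) (hb : b ∈ s) (hab : a ≠ b) :
    f a + f b ≤ ∑ i ∈ s, f i := by
  rw [← Finset.sum_pair hab]
  apply Finset.sum_le_sum_of_subset
  intro x hx
  simp only [Finset.mem_insert, Finset.mem_singleton] at hx
  rcases hx with rfl | rfl <;> assumption

variable {V E : Type} [Fintype E] [DecidableEq V] {Q : ℕ}
variable (fste snde : E → V) (perm : E → Equiv.Perm (Fin Q))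

lemma cEdges_le_mdeg (u v : V) (g : Equiv.Perm (Fin Q)) :
    cEdges fste snde perm u v g ≤ mdeg fste snde u := by
  classical
  unfold cEdges mdeg
  calc (Finset.univ.filter (fun e =>
      (fste e = u ∧ snde e = v ∧ perm e = g) ∨
      (fste e = v ∧ snde e = u ∧ (perm e)⁻¹ = g))).card
      ≤ ((Finset.univ.filter (fun e => fste e = u)) ∪
          (Finset.univ.filter (fun e => snde e = u))).card := by
        apply Finset.card_le_card
        intro e he
        simp only [Finset.mem_filter, Finset.mem_univ, true_and] at he
        simp only [Finset.mem_union, Finset.mem_filter, Finset.mem_univ, true_and]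
        rcases he with ⟨h1, _, _⟩ | ⟨_, h2, _⟩
        · exact Or.inl h1
        · exact Or.inr h2
    _ ≤ _ := Finset.card_union_le _ _

lemma L1 (S R : Finset V) :
    bdry fste snde S R ≤
      ∑ u ∈ S, ∑ v ∈ R \ S, ∑ g : Equiv.Perm (Fin Q), cEdges fste snde perm u v g := by
  classical
  unfold bdry cEdges
  simp only [Finset.card_filter]
  rw [swap4]
  apply Finset.sum_le_sum
  intro e _
  split_ifs with h
  · rcases h with ⟨h1, h2⟩ | ⟨h1, h2⟩
    · refine le_trans ?_ (le_sum3 S (R \ S) Finset.univ _ h1 h2 (Finset.mem_univ (perm e)))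
      simp
    · refine le_trans ?_ (le_sum3 S (R \ S) Finset.univ _ h1 h2 (Finset.mem_univ (perm e)⁻¹))
      simp
  · exact Nat.zero_le _

lemma L2 (S : Finset V) (ℓ : V → Fin Q) (hne : ∀ e, fste e ≠ snde e) :
    2 * badIn fste snde perm S ℓ ≤
      ∑ u ∈ S, ∑ v ∈ S, ∑ g : Equiv.Perm (Fin Q),
        (if ℓ v ≠ g (ℓ u) then cEdges fste snde perm u v g else 0) := by
  classical
  unfold badIn cEdges
  simp only [Finset.card_filter]
  have hpush : ∀ (u v : V) (g : Equiv.Perm (Fin Q)),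
      (if ℓ v ≠ g (ℓ u) then (∑ e : E, if (fste e = u ∧ snde e = v ∧ perm e = g) ∨
        (fste e = v ∧ snde e = u ∧ (perm e)⁻¹ = g) then 1 else 0) else 0)
      = ∑ e : E, if (ℓ v ≠ g (ℓ u)) ∧ ((fste e = u ∧ snde e = v ∧ perm e = g) ∨
        (fste e = v ∧ snde e = u ∧ (perm e)⁻¹ = g)) then 1 else 0 := by
    intro u v g
    split_ifs with hc
    · apply Finset.sum_congr rfl
      intro e _
      simp [hc]
    · symm
      apply Finset.sum_eq_zero
      intro e _
      simp [hc]
  simp only [hpush]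
  rw [swap4, Finset.mul_sum]
  apply Finset.sum_le_sum
  intro e _
  split_ifs with h
  · obtain ⟨h1, h2, h3⟩ := h
    rw [mul_one]
    have step : (1 : ℕ) + 1 ≤ ∑ u ∈ S, ∑ v ∈ S, ∑ g : Equiv.Perm (Fin Q),
        (if (ℓ v ≠ g (ℓ u)) ∧ ((fste e = u ∧ snde e = v ∧ perm e = g) ∨
          (fste e = v ∧ snde e = u ∧ (perm e)⁻¹ = g)) then 1 else 0) := by
      have key := two_le_sum S (fun u => ∑ v ∈ S, ∑ g : Equiv.Perm (Fin Q),
        (if (ℓ v ≠ g (ℓ u)) ∧ ((fste e = u ∧ snde e = v ∧ perm e = g) ∨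
          (fste e = v ∧ snde e = u ∧ (perm e)⁻¹ = g)) then 1 else 0)) h1 h2 (hne e)
      refine le_trans (add_le_add ?_ ?_) key
      · refine le_trans ?_ (le_sum2 S Finset.univ _ h2 (Finset.mem_univ (perm e)))
        simp [h3]
      · refine le_trans ?_ (le_sum2 S Finset.univ _ h1 (Finset.mem_univ (perm e)⁻¹))
        have : ℓ (fste e) ≠ (perm e)⁻¹ (ℓ (snde e)) := by
          intro hcontra
          apply h3
          rw [hcontra]
          simp
        simp [this, show ℓ (fste e) ≠ (perm e).symm (ℓ (snde e)) from this]
    simpa using step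
  · simp

end Aux

/-- Low failure probability for one trace step implies UG-peelability: if `β_R(S,ℓ) < η/4`
for kernels dominating the one-step walk transitions inside `R`, then `S` is
`η`-UG-peelable in `R`. -/
theorem stmt7 (Q : ℕ) (V E : Type) [Fintype V] [Fintype E] [DecidableEq V]
    (fste snde : E → V) (hne : ∀ e, fste e ≠ snde e)
    (perm : E → Equiv.Perm (Fin Q))
    (R : Finset V) (hR : R.Nonempty)
    (K : Equiv.Perm (Fin Q) → V → V → ℝ)
    (hK0 : ∀ g u v, 0 ≤ K g u v)
    (hK1 : ∀ u ∈ R, ∑ v ∈ R, ∑ g : Equiv.Perm (Fin Q), K g u v = 1)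
    (hKlb : ∀ u ∈ R, ∀ v ∈ R, ∀ g : Equiv.Perm (Fin Q),
      (cEdges fste snde perm u v g : ℝ) / (2 * (mdeg fste snde u : ℝ)) ≤ K g u v)
    (η : ℝ) (S : Finset V) (hS : S.Nonempty) (hSR : S ⊆ R)
    (ℓ : V → Fin Q)
    (hβ : betaR fste snde K R S ℓ < η / 4) :
    ∃ ℓ' : V → Fin Q,
      ((badIn fste snde perm S ℓ' : ℝ) + (bdry fste snde S R : ℝ))
        ≤ η * (mvol fste snde S : ℝ) := by
  classical
  refine ⟨ℓ, ?_⟩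
  by_cases h0 : mvol fste snde S = 0
  · -- all degrees in S are zero, so no incident edges at all
    have hdeg : ∀ u ∈ S, mdeg fste snde u = 0 := by
      intro u hu
      exact (Finset.sum_eq_zero_iff.mp h0) u hu
    have hfst : ∀ e : E, fste e ∉ S := by
      intro e he
      have h1 : 0 < mdeg fste snde (fste e) := by
        unfold mdeg
        have hm : e ∈ Finset.univ.filter (fun e' => fste e' = fste e) := by simp
        have := Finset.card_pos.mpr ⟨e, hm⟩
        omega
      rw [hdeg _ he] at h1
      exact absurd h1 (lt_irrefl 0)
    have hsnd : ∀ e : E, snde e ∉ S := by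
      intro e he
      have h1 : 0 < mdeg fste snde (snde e) := by
        unfold mdeg
        have hm : e ∈ Finset.univ.filter (fun e' => snde e' = snde e) := by simp
        have := Finset.card_pos.mpr ⟨e, hm⟩
        omega
      rw [hdeg _ he] at h1
      exact absurd h1 (lt_irrefl 0)
    have hb0 : badIn fste snde perm S ℓ = 0 := by
      unfold badIn
      rw [Finset.card_eq_zero, Finset.filter_eq_empty_iff]
      intro e _
      exact fun h => hfst e h.1
    have hd0 : bdry fste snde S R = 0 := by
      unfold bdry
      rw [Finset.card_eq_zero, Finset.filter_eq_empty_iff]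
      intro e _
      rintro (⟨h1, _⟩ | ⟨h1, _⟩)
      · exact hfst e h1
      · exact hsnd e h1
    simp [hb0, hd0, h0]
  · -- main case: positive volume
    have hvS : (0 : ℝ) < (mvol fste snde S : ℝ) := by
      exact_mod_cast Nat.pos_of_ne_zero h0
    have hvRn : mvol fste snde S ≤ mvol fste snde R :=
      Finset.sum_le_sum_of_subset hSR
    have hvR : (0 : ℝ) < (mvol fste snde R : ℝ) := by
      have : 0 < mvol fste snde R := lt_of_lt_of_le (Nat.pos_of_ne_zero h0) hvRn
      exact_mod_cast this
    set vS : ℝ := (mvol fste snde S : ℝ) with hvSdef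
    set W : ℝ := (mvol fste snde R : ℝ) with hWdef
    set T : V → ℝ := fun u =>
      (∑ v ∈ R \ S, ∑ g : Equiv.Perm (Fin Q), K g u v) +
        ∑ v ∈ S, ∑ g : Equiv.Perm (Fin Q), if ℓ v ≠ g (ℓ u) then K g u v else 0 with hTdef
    set N : ℝ := ∑ u ∈ S, (mdeg fste snde u : ℝ) * T u with hNdef
    have hT0 : ∀ u, 0 ≤ T u := by
      intro u
      rw [hTdef]
      apply add_nonneg
      · exact Finset.sum_nonneg fun v _ => Finset.sum_nonneg fun g _ => hK0 g u v
      · refine Finset.sum_nonneg fun v _ => Finset.sum_nonneg fun g _ => ?_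
        split_ifs
        · exact hK0 _ u v
        · exact le_refl 0
    have hN0 : (0 : ℝ) ≤ N := by
      rw [hNdef]
      refine Finset.sum_nonneg fun u _ => mul_nonneg (by positivity) (hT0 u)
    have hvS' : vS ≠ 0 := ne_of_gt hvS
    have hW' : W ≠ 0 := ne_of_gt hvR
    -- β = N / vS
    have hβeq : betaR fste snde K R S ℓ = N / vS := by
      unfold betaR
      have hsum1 : ∑ u ∈ S, ((mdeg fste snde u : ℝ) / W) = vS / W := by
        rw [← Finset.sum_div]
        congr 1
        rw [hvSdef]
        unfold mvol
        push_cast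
        rfl
      have hsum2 : ∑ u ∈ S, ((mdeg fste snde u : ℝ) / W) *
          ((∑ v ∈ R \ S, ∑ g : Equiv.Perm (Fin Q), K g u v) +
            ∑ v ∈ S, ∑ g : Equiv.Perm (Fin Q), if ℓ v ≠ g (ℓ u) then K g u v else 0)
          = N / W := by
        rw [hNdef, Finset.sum_div]
        refine Finset.sum_congr rfl fun u _ => ?_
        simp only [hTdef]
        ring
      rw [hsum1, hsum2]
      field_simp
    -- lower bound on N
    have hNlb : ((bdry fste snde S R : ℝ) + 2 * (badIn fste snde perm S ℓ : ℝ)) / 2 ≤ N := by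
      have hper : ∀ u ∈ S,
          (((∑ v ∈ R \ S, ∑ g : Equiv.Perm (Fin Q), cEdges fste snde perm u v g : ℕ) : ℝ) +
            ((∑ v ∈ S, ∑ g : Equiv.Perm (Fin Q),
              if ℓ v ≠ g (ℓ u) then cEdges fste snde perm u v g else 0 : ℕ) : ℝ)) / 2
            ≤ (mdeg fste snde u : ℝ) * T u := by
        intro u hu
        by_cases hd : mdeg fste snde u = 0
        · have hc0 : ∀ v g, cEdges fste snde perm u v g = 0 := by
            intro v g
            have := cEdges_le_mdeg fste snde perm u v g
            omega
          have h1 : (((∑ v ∈ R \ S, ∑ g : Equiv.Perm (Fin Q),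
              cEdges fste snde perm u v g : ℕ) : ℝ)) = 0 := by
            simp [hc0]
          have h2 : (((∑ v ∈ S, ∑ g : Equiv.Perm (Fin Q),
              if ℓ v ≠ g (ℓ u) then cEdges fste snde perm u v g else 0 : ℕ) : ℝ)) = 0 := by
            simp [hc0]
          rw [h1, h2, hd]
          simp
        · have hdpos : (0 : ℝ) < (mdeg fste snde u : ℝ) := by
            exact_mod_cast Nat.pos_of_ne_zero hd
          have hB : ((∑ v ∈ R \ S, ∑ g : Equiv.Perm (Fin Q),
              cEdges fste snde perm u v g : ℕ) : ℝ) / (2 * (mdeg fste snde u : ℝ))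
              ≤ ∑ v ∈ R \ S, ∑ g : Equiv.Perm (Fin Q), K g u v := by
            push_cast
            rw [Finset.sum_div]
            apply Finset.sum_le_sum
            intro v hv
            rw [Finset.sum_div]
            apply Finset.sum_le_sum
            intro g _
            exact hKlb u (hSR hu) v (Finset.mem_sdiff.mp hv).1 g
          have hC : ((∑ v ∈ S, ∑ g : Equiv.Perm (Fin Q),
              if ℓ v ≠ g (ℓ u) then cEdges fste snde perm u v g else 0 : ℕ) : ℝ) /
                (2 * (mdeg fste snde u : ℝ))
              ≤ ∑ v ∈ S, ∑ g : Equiv.Perm (Fin Q), if ℓ v ≠ g (ℓ u) then K g u v else 0 := by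
            push_cast
            rw [Finset.sum_div]
            apply Finset.sum_le_sum
            intro v hv
            rw [Finset.sum_div]
            apply Finset.sum_le_sum
            intro g _
            split_ifs
            · exact hKlb u (hSR hu) v (hSR hv) g
            · simp
          have hcomb := add_le_add hB hC
          rw [← add_div] at hcomb
          have hmul := mul_le_mul_of_nonneg_left hcomb (le_of_lt hdpos)
          calc (((∑ v ∈ R \ S, ∑ g : Equiv.Perm (Fin Q),
              cEdges fste snde perm u v g : ℕ) : ℝ) +
              ((∑ v ∈ S, ∑ g : Equiv.Perm (Fin Q),
                if ℓ v ≠ g (ℓ u) then cEdges fste snde perm u v g else 0 : ℕ) : ℝ)) / 2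
              = (mdeg fste snde u : ℝ) *
                ((((∑ v ∈ R \ S, ∑ g : Equiv.Perm (Fin Q),
                  cEdges fste snde perm u v g : ℕ) : ℝ) +
                ((∑ v ∈ S, ∑ g : Equiv.Perm (Fin Q),
                  if ℓ v ≠ g (ℓ u) then cEdges fste snde perm u v g else 0 : ℕ) : ℝ)) /
                  (2 * (mdeg fste snde u : ℝ))) := by
                field_simp
            _ ≤ (mdeg fste snde u : ℝ) * T u := by
                rw [hTdef]
                exact hmul
      have hsumper := Finset.sum_le_sum hper
      rw [← hNdef] at hsumper
      refine le_trans ?_ hsumper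
      rw [← Finset.sum_div, Finset.sum_add_distrib]
      have hL1 : (bdry fste snde S R : ℝ) ≤
          ∑ u ∈ S, ((∑ v ∈ R \ S, ∑ g : Equiv.Perm (Fin Q),
            cEdges fste snde perm u v g : ℕ) : ℝ) := by
        exact_mod_cast L1 fste snde perm S R
      have hL2 : 2 * (badIn fste snde perm S ℓ : ℝ) ≤
          ∑ u ∈ S, ((∑ v ∈ S, ∑ g : Equiv.Perm (Fin Q),
            if ℓ v ≠ g (ℓ u) then cEdges fste snde perm u v g else 0 : ℕ) : ℝ) := by
        exact_mod_cast L2 fste snde perm S ℓ hne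
      linarith [hL1, hL2]
    -- conclude
    have hβ' : N / vS < η / 4 := by rw [← hβeq]; exact hβ
    have hN4 : N < η / 4 * vS := (div_lt_iff₀ hvS).mp hβ'
    have hη : 0 < η := by
      have : 0 ≤ N / vS := div_nonneg hN0 (le_of_lt hvS)
      linarith
    have ha : (0:ℝ) ≤ (badIn fste snde perm S ℓ : ℝ) := Nat.cast_nonneg _
    have hb : (0:ℝ) ≤ (bdry fste snde S R : ℝ) := Nat.cast_nonneg _
    nlinarith [mul_pos hη hvS]
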